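/- If (T,r) is a DFS tree of a finite simple graph G with n vertices, then the number of edges of G is at most the sum over all vertices v of depth(v), and hence at most n times the height of (T,r). -/

import Mathlib

/-- `u` lies on the unique path in `T` from `r` to `v`
(characterized in a tree via distances). -/
def IsAncestor {V : Type*} (T : SimpleGraph V) (r u v : V) : Prop :=
  T.dist r u + T.dist u v = T.dist r v

/-- `u` and `v` are comparable in the rooted tree `(T, r)`. -/
def TreeComparable {V : Type*} (T : SimpleGraph V) (r u v : V) : Prop :=
  IsAncestor T r u v ∨ IsAncestor T r v u

/-- `(T, r)` is a DFS tree of `G`. -/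
def IsDFSTree {V : Type*} (G T : SimpleGraph V) (r : V) : Prop :=
  T ≤ G ∧ T.IsTree ∧ ∀ u v : V, G.Adj u v → TreeComparable T r u v

/-- In a tree, two ancestors of `v` at equal distance from `r` coincide. -/
lemma ancestor_unique {V : Type*} {T : SimpleGraph V} (hT : T.IsTree) {r u u' v : V}
    (h1 : IsAncestor T r u v) (h2 : IsAncestor T r u' v)
    (hd : T.dist r u = T.dist r u') : u = u' := by
  have hconn := hT.isConnected
  -- build geodesic walk through an ancestor
  have key : ∀ w : V, IsAncestor T r w v →
      ∃ p : T.Walk r v, p.IsPath ∧ p.getVert (T.dist r w) = w := by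
    intro w hw
    obtain ⟨p1, hp1⟩ := hconn.exists_walk_length_eq_dist r w
    obtain ⟨p2, hp2⟩ := hconn.exists_walk_length_eq_dist w v
    refine ⟨p1.append p2, ?_, ?_⟩
    · apply SimpleGraph.Walk.isPath_of_length_eq_dist
      rw [SimpleGraph.Walk.length_append, hp1, hp2, hw]
    · rw [SimpleGraph.Walk.getVert_append, ← hp1]
      simp [SimpleGraph.Walk.getVert_length]
  obtain ⟨p, hp, hpw⟩ := key u h1
  obtain ⟨q, hq, hqw⟩ := key u' h2
  have : p = q := ((hT.existsUnique_path r v).unique hp hq)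
  rw [← hpw, ← hqw, hd, this]

/-- If `(T,r)` is a DFS tree of a finite simple graph `G` with `n` vertices, then the number
of edges of `G` is at most the sum over all vertices `v` of `depth v`, and hence at most
`n` times the height of `(T,r)`. -/
theorem stmt1 {V : Type*} [Fintype V] (G T : SimpleGraph V) (r : V)
    [Fintype G.edgeSet] (h : IsDFSTree G T r) :
    G.edgeFinset.card ≤ ∑ v : V, T.dist r v ∧
    G.edgeFinset.card ≤ Fintype.card V * (Finset.univ.sup fun v : V => T.dist r v) := by
  classical
  obtain ⟨hle, hT, hcomp⟩ := h
  have hconn := hT.isConnected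
  -- every edge has a chosen (ancestor, descendant) pair
  have exP : ∀ e ∈ G.edgeFinset, ∃ p : V × V,
      s(p.1, p.2) = e ∧ IsAncestor T r p.1 p.2 ∧ p.1 ≠ p.2 := by
    intro e he
    rw [SimpleGraph.mem_edgeFinset] at he
    induction e with
    | h u v =>
      have hadj : G.Adj u v := he
      rcases hcomp u v hadj with hc | hc
      · exact ⟨(u, v), rfl, hc, hadj.ne⟩
      · exact ⟨(v, u), Sym2.eq_swap, hc, hadj.ne'⟩
  set F : Sym2 V → Σ _ : V, ℕ := fun e =>
    if he : ∃ p : V × V, s(p.1, p.2) = e ∧ IsAncestor T r p.1 p.2 ∧ p.1 ≠ p.2 then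
      ⟨he.choose.2, T.dist r he.choose.1⟩
    else ⟨r, 0⟩ with hF
  have hmain : G.edgeFinset.card ≤ ∑ v : V, T.dist r v := by
    have hcard : ∑ v : V, T.dist r v
        = (Finset.univ.sigma fun v : V => Finset.range (T.dist r v)).card := by
      simp [Finset.card_sigma]
    rw [hcard]
    apply Finset.card_le_card_of_injOn F
    · intro e he
      have hex := exP e he
      obtain ⟨hs, hanc, hne⟩ := hex.choose_spec
      have hFe : F e = ⟨hex.choose.2, T.dist r hex.choose.1⟩ := dif_pos hex
      rw [hFe, Finset.mem_coe, Finset.mem_sigma]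
      refine ⟨Finset.mem_univ _, Finset.mem_range.2 ?_⟩
      have hpos : 0 < T.dist hex.choose.1 hex.choose.2 :=
        hconn.pos_dist_of_ne hne
      have hanc' : T.dist r hex.choose.1 + T.dist hex.choose.1 hex.choose.2
          = T.dist r hex.choose.2 := hanc
      show T.dist r hex.choose.1 < T.dist r hex.choose.2
      omega
    · intro e1 he1 e2 he2 heq
      have hx1 := exP e1 he1
      have hx2 := exP e2 he2
      obtain ⟨hs1, hanc1, -⟩ := hx1.choose_spec
      obtain ⟨hs2, hanc2, -⟩ := hx2.choose_spec
      rw [hF] at heq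
      simp only [dif_pos hx1, dif_pos hx2] at heq
      obtain ⟨hv, hd⟩ := Sigma.mk.inj_iff.mp heq
      have hd' : T.dist r hx1.choose.1 = T.dist r hx2.choose.1 := eq_of_heq hd
      rw [hv] at hanc1
      have hu : hx1.choose.1 = hx2.choose.1 :=
        ancestor_unique hT hanc1 hanc2 hd'
      rw [← hs1, ← hs2, hu, hv]
  refine ⟨hmain, hmain.trans ?_⟩
  calc ∑ v : V, T.dist r v
      ≤ Finset.univ.card * (Finset.univ.sup fun v : V => T.dist r v) := by
        rw [← smul_eq_mul]
        exact Finset.sum_le_card_nsmul _ _ _ fun v _ => Finset.le_sup (Finset.mem_univ v)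
    _ = Fintype.card V * (Finset.univ.sup fun v : V => T.dist r v) := by
        rw [Finset.card_univ]
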